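/- Fix a real number t ≥ 2 and define F : [0,∞) → ℝ by F(λ) = 1 if λ ≤ 1 − 2/t; F(λ) = (1/8)(4 + t² − 2λt² + λ²t² + 4t(1−λ)·log(2/(t(1−λ)))) if 1 − 2/t ≤ λ < 1; F(λ) = (1/8)(4 − t² + 2λt² − λ²t² − 4t(λ−1)·log(2/(t(λ−1)))) if 1 ≤ λ < 1 + 2/t; and F(λ) = 0 if λ ≥ 1 + 2/t, where s·log(2/(ts)) is interpreted as 0 at s = 0. Then F is continuous on [0,∞), F is continuously differentiable on (0,1) ∪ (1,∞), and F'(λ) → −∞ as λ → 1 (from either side). -/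

import Mathlib

noncomputable section

/-- The limiting gap distribution `F = G_{t,𝒫}` for `t ≥ 2` (Corollary 1.2 of the
paper).  A term `s·log(2/(t·s))` is interpreted as `0` when `s = 0`; this is automatic
in Lean since `2/0 = 0` and `log 0 = 0`. -/
def Flim (t lam : ℝ) : ℝ :=
  if lam ≤ 1 - 2 / t then 1
  else if lam < 1 then
    (1 / 8) * (4 + t ^ 2 - 2 * lam * t ^ 2 + lam ^ 2 * t ^ 2 +
      4 * t * (1 - lam) * Real.log (2 / (t * (1 - lam))))
  else if lam < 1 + 2 / t then
    (1 / 8) * (4 - t ^ 2 + 2 * lam * t ^ 2 - lam ^ 2 * t ^ 2 -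
      4 * t * (lam - 1) * Real.log (2 / (t * (lam - 1))))
  else 0

open Real Set Filter Topology

namespace S19


def B' (t lam : ℝ) : ℝ :=
  (1/8)*(4 + t^2 - 2*lam*t^2 + lam^2*t^2) + (t/2)*((1-lam)*(Real.log 2 - Real.log t))
    - (t/2)*((1-lam)*Real.log (1-lam))

def C' (t lam : ℝ) : ℝ :=
  (1/8)*(4 - t^2 + 2*lam*t^2 - lam^2*t^2) - (t/2)*((lam-1)*(Real.log 2 - Real.log t))
    + (t/2)*((lam-1)*Real.log (lam-1))

def g (t lam : ℝ) : ℝ :=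
  -(t^2 * min |1-lam| (2/t) / 4)
    - (t/2)*(Real.log 2 - Real.log t - Real.log (min |1-lam| (2/t)) - 1)

lemma continuous_B' (t : ℝ) : Continuous (B' t) := by
  unfold B'
  apply Continuous.sub
  · fun_prop
  · exact continuous_const.mul (Real.continuous_mul_log.comp (continuous_const.sub continuous_id))

lemma continuous_C' (t : ℝ) : Continuous (C' t) := by
  unfold C'
  apply Continuous.add
  · fun_prop
  · exact continuous_const.mul (Real.continuous_mul_log.comp (continuous_id.sub continuous_const))

lemma hasDerivAt_B' {t lam : ℝ} (h : lam ≠ 1) :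
    HasDerivAt (B' t)
      (-(t^2*(1-lam)/4) - (t/2)*(Real.log 2 - Real.log t - Real.log (1-lam) - 1)) lam := by
  have h1 : (1 : ℝ) - lam ≠ 0 := sub_ne_zero.2 (Ne.symm h)
  have hsub : HasDerivAt (fun x : ℝ => 1 - x) (0 - 1) lam :=
    (hasDerivAt_const lam 1).sub (hasDerivAt_id lam)
  have hml : HasDerivAt (fun x : ℝ => (1-x) * Real.log (1-x))
      ((Real.log (1-lam) + 1) * (0 - 1)) lam :=
    (Real.hasDerivAt_mul_log h1).comp lam hsub
  have ha : HasDerivAt (fun x : ℝ => 2*x*t^2) ((2*1)*t^2) lam :=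
    ((hasDerivAt_id lam).const_mul 2).mul_const (t^2)
  have hb : HasDerivAt (fun x : ℝ => x^2*t^2) (((2:ℕ)*lam^1)*t^2) lam :=
    (hasDerivAt_pow 2 lam).mul_const (t^2)
  have hp : HasDerivAt (fun x : ℝ => (1/8)*(4 + t^2 - 2*x*t^2 + x^2*t^2))
      ((1/8)*(0 - (2*1)*t^2 + ((2:ℕ)*lam^1)*t^2)) lam :=
    (((hasDerivAt_const lam (4 + t^2)).sub ha).add hb).const_mul (1/8)
  have h2 : HasDerivAt (fun x : ℝ => (t/2)*((1-x)*(Real.log 2 - Real.log t)))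
      ((t/2)*((0-1)*(Real.log 2 - Real.log t))) lam :=
    (hsub.mul_const _).const_mul (t/2)
  have key := (hp.add h2).sub (hml.const_mul (t/2))
  refine HasDerivAt.congr_deriv key ?_
  push_cast
  ring

lemma hasDerivAt_C' {t lam : ℝ} (h : lam ≠ 1) :
    HasDerivAt (C' t)
      (-(t^2*(lam-1)/4) - (t/2)*(Real.log 2 - Real.log t - Real.log (lam-1) - 1)) lam := by
  have h1 : lam - 1 ≠ 0 := sub_ne_zero.2 h
  have hsub : HasDerivAt (fun x : ℝ => x - 1) (1 - 0) lam :=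
    (hasDerivAt_id lam).sub (hasDerivAt_const lam 1)
  have hml : HasDerivAt (fun x : ℝ => (x-1) * Real.log (x-1))
      ((Real.log (lam-1) + 1) * (1 - 0)) lam := by
    have := (Real.hasDerivAt_mul_log h1).comp lam hsub; exact this
  have ha : HasDerivAt (fun x : ℝ => 2*x*t^2) ((2*1)*t^2) lam :=
    ((hasDerivAt_id lam).const_mul 2).mul_const (t^2)
  have hb : HasDerivAt (fun x : ℝ => x^2*t^2) (((2:ℕ)*lam^1)*t^2) lam :=
    (hasDerivAt_pow 2 lam).mul_const (t^2)
  have hp : HasDerivAt (fun x : ℝ => (1/8)*(4 - t^2 + 2*x*t^2 - x^2*t^2))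
      ((1/8)*(0 + (2*1)*t^2 - ((2:ℕ)*lam^1)*t^2)) lam :=
    (((hasDerivAt_const lam (4 - t^2)).add ha).sub hb).const_mul (1/8)
  have h2 : HasDerivAt (fun x : ℝ => (t/2)*((x-1)*(Real.log 2 - Real.log t)))
      ((t/2)*((1-0)*(Real.log 2 - Real.log t))) lam :=
    (hsub.mul_const _).const_mul (t/2)
  have key := (hp.sub h2).add (hml.const_mul (t/2))
  refine HasDerivAt.congr_deriv key ?_
  push_cast
  ring

variable {t : ℝ}

lemma ht0 (ht : 2 ≤ t) : (0:ℝ) < t := lt_of_lt_of_le two_pos ht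
lemma h2t (ht : 2 ≤ t) : (0:ℝ) < 2/t := div_pos two_pos (ht0 ht)
lemma h2t1 (ht : 2 ≤ t) : 2/t ≤ 1 := (div_le_one (ht0 ht)).2 ht
lemma ha1 (ht : 2 ≤ t) : 1 - 2/t < 1 := by linarith [h2t ht]
lemma hb1 (ht : 2 ≤ t) : 1 < 1 + 2/t := by linarith [h2t ht]
lemma hlog2t (ht : 2 ≤ t) : Real.log (2/t) = Real.log 2 - Real.log t :=
  Real.log_div two_ne_zero (ht0 ht).ne'

lemma flim_eq_one (lam : ℝ) (h : lam ≤ 1 - 2/t) : Flim t lam = 1 := by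
  simp [Flim, h]

lemma flim_eq_zero (ht : 2 ≤ t) (lam : ℝ) (h : 1 + 2/t ≤ lam) : Flim t lam = 0 := by
  have h1 : ¬ lam ≤ 1 - 2/t := by linarith [h2t ht]
  have h2 : ¬ lam < 1 := by linarith [h2t ht]
  have h3 : ¬ lam < 1 + 2/t := not_lt.2 h
  simp [Flim, h1, h2, h3]

lemma flim_one (ht : 2 ≤ t) : Flim t 1 = 1/2 := by
  have h1 : ¬ (1:ℝ) ≤ 1 - 2/t := by linarith [h2t ht]
  have h3 : (1:ℝ) < 1 + 2/t := hb1 ht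
  simp only [Flim, h1, lt_irrefl, h3, if_false, if_true]
  norm_num
  ring

lemma flim_eq_B' (ht : 2 ≤ t) (lam : ℝ) (h : lam ∈ Icc (1 - 2/t) 1) :
    Flim t lam = B' t lam := by
  obtain ⟨hl, hr⟩ := h
  rcases eq_or_lt_of_le hr with rfl | hr1
  · rw [flim_one ht]
    simp only [B', sub_self, Real.log_zero, mul_zero, zero_mul, sub_zero, add_zero]
    ring
  rcases eq_or_lt_of_le hl with rfl | hl1
  · rw [flim_eq_one _ le_rfl, B']
    rw [show (1:ℝ) - (1 - 2/t) = 2/t by ring, hlog2t ht]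
    have h0 := (ht0 ht).ne'
    field_simp
    ring
  · have h1 : ¬ lam ≤ 1 - 2/t := not_le.2 hl1
    have h1lam : (0:ℝ) < 1 - lam := by linarith
    simp only [Flim, h1, hr1, if_true, if_false]
    have hlog : Real.log (2 / (t * (1 - lam)))
        = Real.log 2 - Real.log t - Real.log (1 - lam) := by
      rw [Real.log_div two_ne_zero (mul_ne_zero (ht0 ht).ne' h1lam.ne'),
        Real.log_mul (ht0 ht).ne' h1lam.ne']
      ring
    rw [hlog, B']
    ring

lemma flim_eq_C' (ht : 2 ≤ t) (lam : ℝ) (h : lam ∈ Icc 1 (1 + 2/t)) :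
    Flim t lam = C' t lam := by
  obtain ⟨hl, hr⟩ := h
  rcases eq_or_lt_of_le hl with rfl | hl1
  · rw [flim_one ht]
    simp only [C', sub_self, Real.log_zero, mul_zero, zero_mul, add_zero, sub_zero]
    ring
  rcases eq_or_lt_of_le hr with rfl | hr1
  · rw [flim_eq_zero ht _ le_rfl, C']
    rw [show (1:ℝ) + 2/t - 1 = 2/t by ring, hlog2t ht]
    have h0 := (ht0 ht).ne'
    field_simp
    ring
  · have h1 : ¬ lam ≤ 1 - 2/t := by linarith [h2t ht]
    have h2 : ¬ lam < 1 := not_lt.2 hl1.le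
    have h1lam : (0:ℝ) < lam - 1 := by linarith
    simp only [Flim, h1, h2, hr1, if_true, if_false]
    have hlog : Real.log (2 / (t * (lam - 1)))
        = Real.log 2 - Real.log t - Real.log (lam - 1) := by
      rw [Real.log_div two_ne_zero (mul_ne_zero (ht0 ht).ne' h1lam.ne'),
        Real.log_mul (ht0 ht).ne' h1lam.ne']
      ring
    rw [hlog, C']
    ring

lemma g_eq_left (lam : ℝ) (h1 : 1 - 2/t ≤ lam) (h2 : lam < 1) :
    g t lam = -(t^2*(1-lam)/4) - (t/2)*(Real.log 2 - Real.log t - Real.log (1-lam) - 1) := by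
  rw [g, abs_of_pos (by linarith : (0:ℝ) < 1 - lam), min_eq_left (by linarith)]

lemma g_eq_right (lam : ℝ) (h1 : 1 < lam) (h2 : lam ≤ 1 + 2/t) :
    g t lam = -(t^2*(lam-1)/4) - (t/2)*(Real.log 2 - Real.log t - Real.log (lam-1) - 1) := by
  rw [g, abs_of_neg (by linarith : (1:ℝ) - lam < 0), neg_sub, min_eq_left (by linarith)]

lemma g_eq_zero (ht : 2 ≤ t) (lam : ℝ) (h : 2/t ≤ |1 - lam|) : g t lam = 0 := by
  rw [g, min_eq_right h, hlog2t ht]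
  have h0 := (ht0 ht).ne'
  field_simp
  ring

lemma continuousAt_g (ht : 2 ≤ t) (lam : ℝ) (h : lam ≠ 1) : ContinuousAt (g t) lam := by
  have hmc : Continuous (fun x : ℝ => min |1-x| (2/t)) :=
    ((continuous_const.sub continuous_id).abs).min continuous_const
  have hm : 0 < min |1-lam| (2/t) :=
    lt_min (abs_pos.2 (sub_ne_zero.2 (Ne.symm h))) (h2t ht)
  have hl : ContinuousAt (fun x : ℝ => Real.log (min |1-x| (2/t))) lam := by
    have := ContinuousAt.comp (f := fun x : ℝ => min |1-x| (2/t)) (x := lam)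
      (Real.continuousAt_log hm.ne') hmc.continuousAt
    exact this
  unfold g
  exact (((continuousAt_const.mul hmc.continuousAt).div_const 4).neg).sub
    (continuousAt_const.mul (((continuousAt_const.sub hl).sub continuousAt_const)))

lemma flim_hasDerivAt (ht : 2 ≤ t) (lam : ℝ) (h : lam ≠ 1) :
    HasDerivAt (Flim t) (g t lam) lam := by
  rcases lt_trichotomy lam (1 - 2/t) with hc | hc | hc
  · have hev : Flim t =ᶠ[𝓝 lam] fun _ => (1:ℝ) :=
      Filter.eventuallyEq_of_mem (Iio_mem_nhds hc) fun x hx => flim_eq_one x (le_of_lt hx)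
    rw [g_eq_zero ht lam (by rw [abs_of_pos (by linarith [h2t1 ht, h2t ht])]; linarith)]
    exact (hasDerivAt_const lam 1).congr_of_eventuallyEq hev
  · subst hc
    have hane : (1 - 2/t : ℝ) ≠ 1 := (ha1 ht).ne
    have hg0 : g t (1 - 2/t) = 0 := g_eq_zero ht _
      (by rw [show (1:ℝ) - (1 - 2/t) = 2/t by ring, abs_of_pos (h2t ht)])
    rw [hg0]
    have hleft : HasDerivWithinAt (Flim t) 0 (Iic (1 - 2/t)) (1 - 2/t) :=
      ((hasDerivAt_const _ (1:ℝ)).hasDerivWithinAt).congr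
        (fun x hx => flim_eq_one x hx) (flim_eq_one _ le_rfl)
    have hBderiv := hasDerivAt_B' (t := t) hane
    have hB0 : -(t^2*(1-(1 - 2/t))/4)
        - (t/2)*(Real.log 2 - Real.log t - Real.log (1-(1 - 2/t)) - 1) = 0 := by
      rw [show (1:ℝ) - (1 - 2/t) = 2/t by ring, hlog2t ht]
      have h0 := (ht0 ht).ne'
      field_simp
      ring
    rw [hB0] at hBderiv
    have hright : HasDerivWithinAt (Flim t) 0 (Ici (1 - 2/t)) (1 - 2/t) := by
      have h1 : HasDerivWithinAt (Flim t) 0 (Icc (1 - 2/t) 1) (1 - 2/t) :=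
        (hBderiv.hasDerivWithinAt).congr
          (fun x hx => flim_eq_B' ht x hx) (flim_eq_B' ht _ ⟨le_rfl, (ha1 ht).le⟩)
      exact h1.mono_of_mem_nhdsWithin (Icc_mem_nhdsGE_of_mem ⟨le_rfl, ha1 ht⟩)
    have hu := hleft.union hright
    rw [Iic_union_Ici] at hu
    exact hu.hasDerivAt univ_mem
  · rcases lt_trichotomy lam 1 with hd | hd | hd
    · have hev : Flim t =ᶠ[𝓝 lam] B' t :=
        Filter.eventuallyEq_of_mem (Ioo_mem_nhds hc hd)
          (fun x hx => flim_eq_B' ht x ⟨hx.1.le, hx.2.le⟩)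
      rw [g_eq_left lam hc.le hd]
      exact (hasDerivAt_B' h).congr_of_eventuallyEq hev
    · exact absurd hd h
    · rcases lt_trichotomy lam (1 + 2/t) with he | he | he
      · have hev : Flim t =ᶠ[𝓝 lam] C' t :=
          Filter.eventuallyEq_of_mem (Ioo_mem_nhds hd he)
            (fun x hx => flim_eq_C' ht x ⟨hx.1.le, hx.2.le⟩)
        rw [g_eq_right lam hd he.le]
        exact (hasDerivAt_C' h).congr_of_eventuallyEq hev
      · subst he
        have hbne : (1 + 2/t : ℝ) ≠ 1 := (hb1 ht).ne'
        have hg0 : g t (1 + 2/t) = 0 := g_eq_zero ht _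
          (by rw [show (1:ℝ) - (1 + 2/t) = -(2/t) by ring, abs_neg, abs_of_pos (h2t ht)])
        rw [hg0]
        have hright : HasDerivWithinAt (Flim t) 0 (Ici (1 + 2/t)) (1 + 2/t) :=
          ((hasDerivAt_const _ (0:ℝ)).hasDerivWithinAt).congr
            (fun x hx => flim_eq_zero ht x hx) (flim_eq_zero ht _ le_rfl)
        have hCderiv := hasDerivAt_C' (t := t) hbne
        have hC0 : -(t^2*((1 + 2/t)-1)/4)
            - (t/2)*(Real.log 2 - Real.log t - Real.log ((1 + 2/t)-1) - 1) = 0 := by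
          rw [show (1:ℝ) + 2/t - 1 = 2/t by ring, hlog2t ht]
          have h0 := (ht0 ht).ne'
          field_simp
          ring
        rw [hC0] at hCderiv
        have hleft : HasDerivWithinAt (Flim t) 0 (Iic (1 + 2/t)) (1 + 2/t) := by
          have h1 : HasDerivWithinAt (Flim t) 0 (Icc 1 (1 + 2/t)) (1 + 2/t) :=
            (hCderiv.hasDerivWithinAt).congr
              (fun x hx => flim_eq_C' ht x hx) (flim_eq_C' ht _ ⟨(hb1 ht).le, le_rfl⟩)
          exact h1.mono_of_mem_nhdsWithin (Icc_mem_nhdsLE_of_mem ⟨hb1 ht, le_rfl⟩)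
        have hu := hleft.union hright
        rw [Iic_union_Ici] at hu
        exact hu.hasDerivAt univ_mem
      · have hev : Flim t =ᶠ[𝓝 lam] fun _ => (0:ℝ) :=
          Filter.eventuallyEq_of_mem (Ioi_mem_nhds he) fun x hx => flim_eq_zero ht x (le_of_lt hx)
        rw [g_eq_zero ht lam (by rw [abs_of_neg (by linarith [h2t ht])]; linarith)]
        exact (hasDerivAt_const lam 0).congr_of_eventuallyEq hev

end S19

/-- for fixed `t ≥ 2`, the limiting gap distribution `F = Flim t` is
continuous on `[0,∞)`, continuously differentiable on `(0,1) ∪ (1,∞)`, and its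
derivative tends to `-∞` as `λ → 1` from either side. -/
theorem stmt19 (t : ℝ) (ht : 2 ≤ t) :
    ContinuousOn (Flim t) (Set.Ici (0 : ℝ)) ∧
    ContDiffOn ℝ 1 (Flim t) (Set.Ioo (0 : ℝ) 1 ∪ Set.Ioi (1 : ℝ)) ∧
    Filter.Tendsto (deriv (Flim t)) (nhdsWithin 1 (Set.Iio (1 : ℝ))) Filter.atBot ∧
    Filter.Tendsto (deriv (Flim t)) (nhdsWithin 1 (Set.Ioi (1 : ℝ))) Filter.atBot := by
  have hne : ∀ x ∈ Set.Ioo (0:ℝ) 1 ∪ Set.Ioi 1, x ≠ 1 := by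
    rintro x (hx | hx)
    · exact hx.2.ne
    · exact ne_of_gt hx
  refine ⟨?_, ?_, ?_, ?_⟩
  · -- continuity on [0, ∞)
    intro x _
    rcases ne_or_eq x 1 with h | rfl
    · exact ((S19.flim_hasDerivAt ht x h).continuousAt).continuousWithinAt
    · have hleft : ContinuousWithinAt (Flim t) (Set.Iic 1) 1 := by
        have h1 : ContinuousWithinAt (Flim t) (Set.Icc (1-2/t) 1) 1 :=
          ((S19.continuous_B' t).continuousAt.continuousWithinAt).congr
            (fun y hy => S19.flim_eq_B' ht y hy) (S19.flim_eq_B' ht 1 ⟨(S19.ha1 ht).le, le_rfl⟩)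
        exact h1.mono_of_mem_nhdsWithin (Icc_mem_nhdsLE_of_mem ⟨S19.ha1 ht, le_rfl⟩)
      have hright : ContinuousWithinAt (Flim t) (Set.Ici 1) 1 := by
        have h1 : ContinuousWithinAt (Flim t) (Set.Icc 1 (1+2/t)) 1 :=
          ((S19.continuous_C' t).continuousAt.continuousWithinAt).congr
            (fun y hy => S19.flim_eq_C' ht y hy) (S19.flim_eq_C' ht 1 ⟨le_rfl, (S19.hb1 ht).le⟩)
        exact h1.mono_of_mem_nhdsWithin (Icc_mem_nhdsGE_of_mem ⟨le_rfl, S19.hb1 ht⟩)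
      have hu := hleft.union hright
      rw [Iic_union_Ici] at hu
      exact hu.mono (Set.subset_univ _)
  · -- C^1 on (0,1) ∪ (1,∞)
    have hopen : IsOpen (Set.Ioo (0:ℝ) 1 ∪ Set.Ioi 1) := isOpen_Ioo.union isOpen_Ioi
    rw [show (1 : WithTop ℕ∞) = 0 + 1 by norm_num, contDiffOn_succ_iff_deriv_of_isOpen hopen]
    refine ⟨fun x hx =>
      ((S19.flim_hasDerivAt ht x (hne x hx)).differentiableAt).differentiableWithinAt, ?_, ?_⟩
    · simp
    · rw [contDiffOn_zero]
      exact ContinuousOn.congr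
        (fun x hx => (S19.continuousAt_g ht x (hne x hx)).continuousWithinAt)
        (fun x hx => (S19.flim_hasDerivAt ht x (hne x hx)).deriv)
  · -- derivative → -∞ from the left
    have hev : deriv (Flim t) =ᶠ[nhdsWithin 1 (Set.Iio (1:ℝ))]
        fun x => (t/2)*Real.log (1-x) +
          (-(t^2*(1-x)/4) - (t/2)*(Real.log 2 - Real.log t - 1)) := by
      filter_upwards [Ioo_mem_nhdsLT_of_mem (⟨S19.ha1 ht, le_rfl⟩ : (1:ℝ) ∈ Set.Ioc (1-2/t) 1)]
        with x hx
      rw [(S19.flim_hasDerivAt ht x hx.2.ne).deriv, S19.g_eq_left x hx.1.le hx.2]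
      ring
    refine Filter.Tendsto.congr' hev.symm ?_
    have hlog : Filter.Tendsto (fun x : ℝ => Real.log (1-x))
        (nhdsWithin 1 (Set.Iio (1:ℝ))) Filter.atBot := by
      apply Real.tendsto_log_nhdsGT_zero.comp
      apply tendsto_nhdsWithin_of_tendsto_nhds_of_eventually_within
      · have h1 : Filter.Tendsto (fun x : ℝ => 1 - x) (nhds 1) (nhds (1-1)) :=
          (continuous_const.sub continuous_id).tendsto 1
        simpa using h1.mono_left nhdsWithin_le_nhds
      · filter_upwards [self_mem_nhdsWithin] with x hx
        exact Set.mem_Ioi.2 (sub_pos.2 (Set.mem_Iio.1 hx))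
    have h1 : Filter.Tendsto (fun x : ℝ => (t/2)*Real.log (1-x))
        (nhdsWithin 1 (Set.Iio (1:ℝ))) Filter.atBot :=
      (tendsto_const_mul_atBot_of_pos (by linarith [S19.ht0 ht])).2 hlog
    have h2 : Filter.Tendsto
        (fun x : ℝ => -(t^2*(1-x)/4) - (t/2)*(Real.log 2 - Real.log t - 1))
        (nhdsWithin 1 (Set.Iio (1:ℝ)))
        (nhds (-(t^2*(1-1)/4) - (t/2)*(Real.log 2 - Real.log t - 1))) := by
      apply Filter.Tendsto.mono_left _ nhdsWithin_le_nhds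
      exact Continuous.tendsto (by fun_prop) 1
    exact Filter.tendsto_atBot_add_right_of_ge' _ _ h1
      (h2.eventually (eventually_le_nhds (lt_add_one _)))
  · -- derivative → -∞ from the right
    have hev : deriv (Flim t) =ᶠ[nhdsWithin 1 (Set.Ioi (1:ℝ))]
        fun x => (t/2)*Real.log (x-1) +
          (-(t^2*(x-1)/4) - (t/2)*(Real.log 2 - Real.log t - 1)) := by
      filter_upwards [Ioo_mem_nhdsGT_of_mem (⟨le_rfl, S19.hb1 ht⟩ : (1:ℝ) ∈ Set.Ico 1 (1+2/t))]
        with x hx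
      rw [(S19.flim_hasDerivAt ht x hx.1.ne').deriv, S19.g_eq_right x hx.1 hx.2.le]
      ring
    refine Filter.Tendsto.congr' hev.symm ?_
    have hlog : Filter.Tendsto (fun x : ℝ => Real.log (x-1))
        (nhdsWithin 1 (Set.Ioi (1:ℝ))) Filter.atBot := by
      apply Real.tendsto_log_nhdsGT_zero.comp
      apply tendsto_nhdsWithin_of_tendsto_nhds_of_eventually_within
      · have h1 : Filter.Tendsto (fun x : ℝ => x - 1) (nhds 1) (nhds (1-1)) :=
          (continuous_id.sub continuous_const).tendsto 1
        simpa using h1.mono_left nhdsWithin_le_nhds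
      · filter_upwards [self_mem_nhdsWithin] with x hx
        exact Set.mem_Ioi.2 (sub_pos.2 (Set.mem_Ioi.1 hx))
    have h1 : Filter.Tendsto (fun x : ℝ => (t/2)*Real.log (x-1))
        (nhdsWithin 1 (Set.Ioi (1:ℝ))) Filter.atBot :=
      (tendsto_const_mul_atBot_of_pos (by linarith [S19.ht0 ht])).2 hlog
    have h2 : Filter.Tendsto
        (fun x : ℝ => -(t^2*(x-1)/4) - (t/2)*(Real.log 2 - Real.log t - 1))
        (nhdsWithin 1 (Set.Ioi (1:ℝ)))
        (nhds (-(t^2*(1-1)/4) - (t/2)*(Real.log 2 - Real.log t - 1))) := by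
      apply Filter.Tendsto.mono_left _ nhdsWithin_le_nhds
      exact Continuous.tendsto (by fun_prop) 1
    exact Filter.tendsto_atBot_add_right_of_ge' _ _ h1
      (h2.eventually (eventually_le_nhds (lt_add_one _)))


end
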